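/- Let X and Y be G-spaces and f : X → X, h : Y → Y be pseudoequivariant and G-minimal. Then the closure of (G × G)_{f × h}(x, y) equals (closure of G_f(x)) × (closure of G_h(y)) for all x ∈ X, y ∈ Y if and only if for all g, k ∈ G, x ∈ X, y ∈ Y, both (g • f(x), y) and (x, k • h(y)) belong to the closure of (G × G)_{f × h}(x, y). -/

import Mathlib

open Pointwise

/-- `f` is pseudoequivariant: `f(G • x) = G • f(x)` for every `x ∈ X`. -/
def Pseudoequivariant {G X : Type*} [Group G] [MulAction G X] (f : X → X) : Prop :=
  ∀ x : X, f '' (MulAction.orbit G x) = MulAction.orbit G (f x)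

/-- The `G_f`-orbit of `x`: the set `{g • f^[k] x : g ∈ G, k ≥ 0}`. -/
def GfOrbit {G X : Type*} [Group G] [MulAction G X] (f : X → X) (x : X) : Set X :=
  {y | ∃ (g : G) (k : ℕ), g • f^[k] x = y}

/-- `f` is `G`-minimal if every `G_f`-orbit is dense in `X`. -/
def GMinimal {G X : Type*} [Group G] [MulAction G X] [TopologicalSpace X]
    (f : X → X) : Prop :=
  ∀ x : X, closure (GfOrbit (G := G) f x) = Set.univ

/-- The `(G × G)_{f × h}`-orbit of `(x, y)`:
the set `{(g • f^[k] x, g' • h^[k] y) : g, g' ∈ G, k ≥ 0}`. -/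
def ProdGfOrbit {G X Y : Type*} [Group G] [MulAction G X] [MulAction G Y]
    (f : X → X) (h : Y → Y) (p : X × Y) : Set (X × Y) :=
  {q | ∃ (g g' : G) (k : ℕ), q = (g • f^[k] p.1, g' • h^[k] p.2)}

lemma pe_iter {G X : Type*} [Group G] [MulAction G X] {f : X → X}
    (hpef : Pseudoequivariant (G := G) f) (k : ℕ) :
    ∀ (g : G) (z : X), ∃ g' : G, f^[k] (g • z) = g' • f^[k] z := by
  induction k with
  | zero => exact fun g z => ⟨g, rfl⟩
  | succ n ih =>
    intro g z
    have h1 : f (g • z) ∈ f '' MulAction.orbit G z :=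
      ⟨g • z, MulAction.mem_orbit z g, rfl⟩
    rw [hpef z] at h1
    obtain ⟨g1, hg1⟩ := h1
    obtain ⟨g2, hg2⟩ := ih g1 (f z)
    refine ⟨g2, ?_⟩
    rw [Function.iterate_succ_apply, Function.iterate_succ_apply, ← hg1, hg2]

/-- Let `X`, `Y` be `G`-spaces and `f : X → X`, `h : Y → Y` be pseudoequivariant
`G`-minimal maps. Then the closure of the `(G × G)_{f × h}`-orbit of `(x, y)` equals
`closure (G_f(x)) × closure (G_h(y))` for all `x, y` iff for all `g, k ∈ G`, `x ∈ X`,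
`y ∈ Y`, both `(g • f x, y)` and `(x, k • h y)` lie in the closure of the
`(G × G)_{f × h}`-orbit of `(x, y)`. -/
theorem prodGfOrbit_closure_eq_prod_iff {G X Y : Type*} [Group G] [TopologicalSpace G]
    [IsTopologicalGroup G] [TopologicalSpace X] [MulAction G X] [ContinuousSMul G X]
    [TopologicalSpace Y] [MulAction G Y] [ContinuousSMul G Y]
    (f : X → X) (h : Y → Y) (hf : Continuous f) (hh : Continuous h)
    (hpef : Pseudoequivariant (G := G) f) (hpeh : Pseudoequivariant (G := G) h)
    (hminf : GMinimal (G := G) f) (hminh : GMinimal (G := G) h) :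
    (∀ (x : X) (y : Y), closure (ProdGfOrbit (G := G) f h (x, y)) =
      (closure (GfOrbit (G := G) f x)) ×ˢ (closure (GfOrbit (G := G) h y))) ↔
      (∀ (g k : G) (x : X) (y : Y),
        (g • f x, y) ∈ closure (ProdGfOrbit (G := G) f h (x, y)) ∧
        (x, k • h y) ∈ closure (ProdGfOrbit (G := G) f h (x, y))) := by
  constructor
  · intro H g k x y
    constructor <;>
      · rw [H x y, hminf x, hminh y]
        simp [Set.mem_prod]
  · intro H x y
    rw [hminf x, hminh y, Set.univ_prod_univ]
    set C := closure (ProdGfOrbit (G := G) f h (x, y)) with hCdef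
    -- C is invariant under the maps p ↦ (g • f^[k] p.1, g' • h^[k] p.2)
    have hC : ∀ (g g' : G) (k : ℕ), ∀ p ∈ C, (g • f^[k] p.1, g' • h^[k] p.2) ∈ C := by
      intro g g' k p hp
      have hT : Continuous (fun q : X × Y => (g • f^[k] q.1, g' • h^[k] q.2)) := by
        exact ((continuous_const.smul ((hf.iterate k).comp continuous_fst)).prodMk
          (continuous_const.smul ((hh.iterate k).comp continuous_snd)))
      have hmaps : Set.MapsTo (fun q : X × Y => (g • f^[k] q.1, g' • h^[k] q.2))
          (ProdGfOrbit (G := G) f h (x, y)) (ProdGfOrbit (G := G) f h (x, y)) := by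
        rintro q ⟨a, b, m, rfl⟩
        obtain ⟨a', ha⟩ := pe_iter hpef k a (f^[m] (x, y).1)
        obtain ⟨b', hb⟩ := pe_iter hpeh k b (h^[m] (x, y).2)
        refine ⟨g * a', g' * b', k + m, ?_⟩
        simp only [ha, hb, mul_smul, Function.iterate_add_apply]
      exact hmaps.closure hT hp
    -- closure of the orbit of any point of C is contained in C
    have hsub : ∀ p ∈ C, closure (ProdGfOrbit (G := G) f h p) ⊆ C := by
      intro p hp
      refine closure_minimal ?_ isClosed_closure
      rintro q ⟨g, g', k, rfl⟩
      exact hC g g' k p hp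
    have hxyC : (x, y) ∈ C := subset_closure ⟨1, 1, 0, by simp⟩
    -- first coordinate sweep: (a, y) ∈ C for all a
    have h1 : ∀ a : X, (a, y) ∈ C := by
      have hiter : ∀ k : ℕ, (f^[k] x, y) ∈ C := by
        intro k
        induction k with
        | zero => exact hxyC
        | succ n ih =>
          have := hsub _ ih ((H 1 1 (f^[n] x) y).1)
          simpa [Function.iterate_succ_apply'] using this
      intro a
      have ha : a ∈ closure (GfOrbit (G := G) f x) := by
        rw [hminf x]; trivial
      have hcl : IsClosed ((fun a : X => (a, y)) ⁻¹' C) :=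
        isClosed_closure.preimage (continuous_id.prodMk continuous_const)
      refine closure_minimal ?_ hcl ha
      rintro _ ⟨g, k, rfl⟩
      have := hC g 1 0 (f^[k] x, y) (hiter k)
      simpa using this
    -- second coordinate sweep: (a, b) ∈ C for all a, b
    refine Set.eq_univ_iff_forall.2 fun p => ?_
    obtain ⟨a, b⟩ := p
    have hiter : ∀ k : ℕ, (a, h^[k] y) ∈ C := by
      intro k
      induction k with
      | zero => exact h1 a
      | succ n ih =>
        have := hsub _ ih ((H 1 1 a (h^[n] y)).2)
        simpa [Function.iterate_succ_apply'] using this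
    have hb : b ∈ closure (GfOrbit (G := G) h y) := by
      rw [hminh y]; trivial
    have hcl : IsClosed ((fun b : Y => (a, b)) ⁻¹' C) :=
      isClosed_closure.preimage (continuous_const.prodMk continuous_id)
    refine closure_minimal ?_ hcl hb
    rintro _ ⟨g, k, rfl⟩
    have := hC 1 g 0 (a, h^[k] y) (hiter k)
    simpa using this
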